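/- arXiv:1111.5658 — 2 statements merged into one kernel-verified Lean document; each statement's English description precedes it below -/
import Mathlib

section
/- The kernel L associated with a stable polynomial p of degree (n,m) admits the decomposition L(z,w;η) = p(z,w)·A(z,w;η) + p̃(z,w)·B(z,w;η), where A(z,w;η) = η̄^m [p̃(z,1/η̄) − p̃(z,w)]/(1 − wη̄) and B(z,w;η) = η̄^m [p(z,w) − p(z,1/η̄)]/(1 − wη̄) are polynomials of degree at most (n, m−1) in (z,w) and m−1 in η̄. -/
open Complex MeasureTheory Finset
open scoped ComplexInnerProductSpace

noncomputable section

/-- Evaluation of a bivariate polynomial with coefficient array `c i j`,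
supported on `0 ≤ i ≤ n`, `0 ≤ j ≤ m`. -/
def evalP (n m : ℕ) (c : ℕ → ℕ → ℂ) (z w : ℂ) : ℂ :=
  ∑ i ∈ Finset.range (n + 1), ∑ j ∈ Finset.range (m + 1), c i j * z ^ i * w ^ j

/-- `p` is stable: nonvanishing on the closed bidisk. -/
def Stable (n m : ℕ) (c : ℕ → ℕ → ℂ) : Prop :=
  ∀ z w : ℂ, ‖z‖ ≤ 1 → ‖w‖ ≤ 1 → evalP n m c z w ≠ 0

/-- `p` has degree exactly `n` in `z` and `m` in `w`. -/
def DegreeNM (n m : ℕ) (c : ℕ → ℕ → ℂ) : Prop :=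
  (∃ j, c n j ≠ 0) ∧ (∃ i, c i m ≠ 0)

/-- Coefficients of the reflected polynomial `p̃(z,w) = zⁿ wᵐ conj (p (1/z̄, 1/w̄))`. -/
def reflC (n m : ℕ) (c : ℕ → ℕ → ℂ) : ℕ → ℕ → ℂ :=
  fun i j => star (c (n - i) (m - j))

/-- The Laurent monomial `z^i w^j` as a function on the torus, `z = e^{iθ}`, `w = e^{iφ}`. -/
def tmono (i j : ℤ) : ℝ → ℝ → ℂ :=
  fun θ φ => Complex.exp (((i : ℂ) * (θ : ℂ) + (j : ℂ) * (φ : ℂ)) * Complex.I)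

/-- A bivariate polynomial as a function on the torus. -/
def onT (n m : ℕ) (c : ℕ → ℕ → ℂ) : ℝ → ℝ → ℂ :=
  fun θ φ => evalP n m c (Complex.exp ((θ : ℂ) * Complex.I)) (Complex.exp ((φ : ℂ) * Complex.I))

/-- The inner product `⟨f,g⟩ = ∫_{𝕋²} f ḡ dσ/|p|²` of `L²(dσ/|p|²)`. -/
def ip (n m : ℕ) (c : ℕ → ℕ → ℂ) (f g : ℝ → ℝ → ℂ) : ℂ :=
  (1 / (2 * Real.pi) ^ 2 : ℂ) *
    ∫ θ in (0 : ℝ)..(2 * Real.pi), ∫ φ in (0 : ℝ)..(2 * Real.pi),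
      f θ φ * star (g θ φ) / ((Complex.normSq (onT n m c θ φ) : ℝ) : ℂ)

/-- Numerator of the Christoffel–Darboux-type kernel `L`:
`zⁿ (p(z,w) conj(p(1/z̄,η)) − p̃(z,w) conj(p̃(1/z̄,η)))`. -/
def Lnum (n m : ℕ) (c : ℕ → ℕ → ℂ) (z w η : ℂ) : ℂ :=
  z ^ n * (evalP n m c z w * star (evalP n m c (star z)⁻¹ η)
    - evalP n m (reflC n m c) z w * star (evalP n m (reflC n m c) (star z)⁻¹ η))

/-- The kernel built from coefficient arrays `a k` for the polynomials `a_k(z,w)`: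
`L(z,w;η) = Σ_{k<m} a_k(z,w) η̄^k`. -/
def Lsum (n m : ℕ) (a : ℕ → ℕ → ℕ → ℂ) (z w η : ℂ) : ℂ :=
  ∑ k ∈ Finset.range m, evalP (2 * n) (m - 1) (a k) z w * (star η) ^ k

/-- `a` is the coefficient array of the kernel `L` associated with `p`:
`(1 - w η̄) L(z,w;η) = Lnum(z,w;η)` for all `z ≠ 0`. -/
def IsLCoeff (n m : ℕ) (c : ℕ → ℕ → ℂ) (a : ℕ → ℕ → ℕ → ℂ) : Prop :=
  ∀ z w η : ℂ, z ≠ 0 → (1 - w * star η) * Lsum n m a z w η = Lnum n m c z w η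

end

/-- A(z,w;η) = η̄^m [p̃(z,1/η̄) − p̃(z,w)]/(1 − wη̄). -/
noncomputable def Afun (n m : ℕ) (c : ℕ → ℕ → ℂ) (z w η : ℂ) : ℂ :=
  (star η) ^ m *
    (evalP n m (reflC n m c) z ((star η)⁻¹) - evalP n m (reflC n m c) z w) /
      (1 - w * star η)

/-- B(z,w;η) = η̄^m [p(z,w) − p(z,1/η̄)]/(1 − wη̄). -/
noncomputable def Bfun (n m : ℕ) (c : ℕ → ℕ → ℂ) (z w η : ℂ) : ℂ :=
  (star η) ^ m *
    (evalP n m c z w - evalP n m c z ((star η)⁻¹)) /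
      (1 - w * star η)


lemma aux_pow_cancel (x : ℂ) (hx : x ≠ 0) {j m : ℕ} (h : j ≤ m) :
    x ^ m * x⁻¹ ^ j = x ^ (m - j) := by
  rw [pow_sub₀ x hx h, inv_pow]

lemma aux_geom (x w : ℂ) (hx : x ≠ 0) {j m : ℕ} (hj : j ≤ m) :
    x ^ m * (x⁻¹ ^ j - w ^ j) =
      (1 - w * x) * ∑ t ∈ Finset.range j, w ^ (j - 1 - t) * x ^ (m - 1 - t) := by
  have hg := geom_sum₂_mul x⁻¹ w j
  rw [← hg, Finset.sum_mul, Finset.mul_sum, Finset.mul_sum]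
  refine Finset.sum_congr rfl fun t ht => ?_
  have ht' : t < j := Finset.mem_range.mp ht
  have hxt : x ^ m * x⁻¹ ^ t = x ^ (m - t) := aux_pow_cancel x hx (le_trans ht'.le hj)
  have hmt : x ^ (m - t) = x ^ (m - 1 - t) * x := by rw [← pow_succ]; congr 1; omega
  calc x ^ m * (x⁻¹ ^ t * w ^ (j - 1 - t) * (x⁻¹ - w))
      = (x ^ m * x⁻¹ ^ t) * (x⁻¹ - w) * w ^ (j - 1 - t) := by ring
    _ = x ^ (m - 1 - t) * (x * (x⁻¹ - w)) * w ^ (j - 1 - t) := by rw [hxt, hmt]; ring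
    _ = x ^ (m - 1 - t) * (1 - x * w) * w ^ (j - 1 - t) := by
        rw [mul_sub, mul_inv_cancel₀ hx]
    _ = (1 - w * x) * (w ^ (j - 1 - t) * x ^ (m - 1 - t)) := by ring

lemma expand_key (n m : ℕ) (d : ℕ → ℕ → ℂ) (z w x : ℂ) (hx : x ≠ 0)
    (h1 : (1:ℂ) - w * x ≠ 0) :
    x ^ m * (evalP n m d z x⁻¹ - evalP n m d z w) / (1 - w * x)
      = ∑ i ∈ range (n+1), ∑ l ∈ range m, ∑ k ∈ range m,
          (∑ j ∈ range (m+1), ∑ t ∈ range j,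
            if j - 1 - t = l ∧ m - 1 - t = k then d i j else 0) * z ^ i * w ^ l * x ^ k := by
  have num : x ^ m * (evalP n m d z x⁻¹ - evalP n m d z w)
      = (1 - w * x) * ∑ i ∈ range (n+1), ∑ j ∈ range (m+1), ∑ t ∈ range j,
          d i j * z ^ i * (w ^ (j-1-t) * x ^ (m-1-t)) := by
    simp only [evalP, Finset.mul_sum, ← Finset.sum_sub_distrib]
    refine Finset.sum_congr rfl fun i hi => Finset.sum_congr rfl fun j hj => ?_
    have hj' : j ≤ m := Nat.lt_succ_iff.mp (Finset.mem_range.mp hj)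
    calc x ^ m * (d i j * z ^ i * x⁻¹ ^ j - d i j * z ^ i * w ^ j)
        = d i j * z ^ i * (x ^ m * (x⁻¹ ^ j - w ^ j)) := by ring
      _ = d i j * z ^ i * ((1 - w*x) * ∑ t ∈ range j, w ^ (j-1-t) * x ^ (m-1-t)) := by
          rw [aux_geom x w hx hj']
      _ = ∑ t ∈ range j, (1 - w*x) * (d i j * z ^ i * (w ^ (j-1-t) * x ^ (m-1-t))) := by
          rw [Finset.mul_sum, Finset.mul_sum]
          exact Finset.sum_congr rfl fun t _ => by ring
  rw [num, mul_div_cancel_left₀ _ h1]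
  refine Finset.sum_congr rfl fun i _ => ?_
  have step : ∀ (F : ℕ → ℕ → ℕ → ℕ → ℂ),
      (∑ l ∈ range m, ∑ k ∈ range m, ∑ j ∈ range (m+1), ∑ t ∈ range j, F j t l k)
      = ∑ j ∈ range (m+1), ∑ t ∈ range j, ∑ l ∈ range m, ∑ k ∈ range m, F j t l k := by
    intro F
    calc (∑ l ∈ range m, ∑ k ∈ range m, ∑ j ∈ range (m+1), ∑ t ∈ range j, F j t l k)
        = ∑ l ∈ range m, ∑ j ∈ range (m+1), ∑ k ∈ range m, ∑ t ∈ range j, F j t l k :=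
          Finset.sum_congr rfl fun l _ => Finset.sum_comm
      _ = ∑ j ∈ range (m+1), ∑ l ∈ range m, ∑ k ∈ range m, ∑ t ∈ range j, F j t l k :=
          Finset.sum_comm
      _ = ∑ j ∈ range (m+1), ∑ l ∈ range m, ∑ t ∈ range j, ∑ k ∈ range m, F j t l k :=
          Finset.sum_congr rfl fun j _ => Finset.sum_congr rfl fun l _ =>
            Finset.sum_comm
      _ = ∑ j ∈ range (m+1), ∑ t ∈ range j, ∑ l ∈ range m, ∑ k ∈ range m, F j t l k :=
          Finset.sum_congr rfl fun j _ => Finset.sum_comm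
  calc ∑ j ∈ range (m+1), ∑ t ∈ range j, d i j * z ^ i * (w ^ (j-1-t) * x ^ (m-1-t))
      = ∑ j ∈ range (m+1), ∑ t ∈ range j, ∑ l ∈ range m, ∑ k ∈ range m,
          (if j - 1 - t = l ∧ m - 1 - t = k then d i j else 0) * z ^ i * w ^ l * x ^ k := by
        refine Finset.sum_congr rfl fun j hj => Finset.sum_congr rfl fun t ht => ?_
        have hj' : j ≤ m := Nat.lt_succ_iff.mp (Finset.mem_range.mp hj)
        have ht' : t < j := Finset.mem_range.mp ht
        have hl : j - 1 - t ∈ range m := Finset.mem_range.mpr (by omega)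
        have hk : m - 1 - t ∈ range m := Finset.mem_range.mpr (by omega)
        rw [Finset.sum_eq_single (j - 1 - t)]
        · rw [Finset.sum_eq_single (m - 1 - t)]
          · simp only [and_self, if_true]; ring
          · intro k _ hne
            simp only [ite_mul, zero_mul]
            rw [if_neg (fun hc => hne hc.2.symm)]
          · intro h; exact absurd hk h
        · intro l _ hne
          refine Finset.sum_eq_zero fun k _ => ?_
          simp only [ite_mul, zero_mul]
          rw [if_neg (fun hc => hne hc.1.symm)]
        · intro h; exact absurd hl h
    _ = ∑ l ∈ range m, ∑ k ∈ range m, ∑ j ∈ range (m+1), ∑ t ∈ range j,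
          (if j - 1 - t = l ∧ m - 1 - t = k then d i j else 0) * z ^ i * w ^ l * x ^ k :=
        (step _).symm
    _ = ∑ l ∈ range m, ∑ k ∈ range m,
          (∑ j ∈ range (m+1), ∑ t ∈ range j,
            if j - 1 - t = l ∧ m - 1 - t = k then d i j else 0) * z ^ i * w ^ l * x ^ k := by
        simp only [Finset.sum_mul]

lemma refl_eval (n m : ℕ) (c : ℕ → ℕ → ℂ) (z η : ℂ) (hz : z ≠ 0) (hη : star η ≠ (0:ℂ)) :
    z ^ n * star (evalP n m c (star z)⁻¹ η) =
      (star η) ^ m * evalP n m (reflC n m c) z ((star η)⁻¹) := by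
  have L : z ^ n * star (evalP n m c (star z)⁻¹ η)
      = ∑ i ∈ range (n+1), ∑ j ∈ range (m+1),
          star (c i j) * z ^ (n - i) * (star η) ^ j := by
    simp only [evalP, star_sum, Finset.mul_sum]
    refine Finset.sum_congr rfl fun i hi => Finset.sum_congr rfl fun j hj => ?_
    have hi' : i ≤ n := Nat.lt_succ_iff.mp (Finset.mem_range.mp hi)
    simp only [star_mul', star_pow, star_inv₀, star_star]
    rw [show z ^ n * (star (c i j) * z⁻¹ ^ i * star η ^ j)
        = (z ^ n * z⁻¹ ^ i) * star (c i j) * star η ^ j by ring,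
      aux_pow_cancel z hz hi']
    ring
  have R : (star η) ^ m * evalP n m (reflC n m c) z ((star η)⁻¹)
      = ∑ i ∈ range (n+1), ∑ j ∈ range (m+1),
          star (c (n - i) (m - j)) * z ^ i * (star η) ^ (m - j) := by
    simp only [evalP, reflC, Finset.mul_sum]
    refine Finset.sum_congr rfl fun i hi => Finset.sum_congr rfl fun j hj => ?_
    have hj' : j ≤ m := Nat.lt_succ_iff.mp (Finset.mem_range.mp hj)
    rw [show (star η) ^ m * (star (c (n-i) (m-j)) * z ^ i * (star η)⁻¹ ^ j)
        = ((star η) ^ m * (star η)⁻¹ ^ j) * star (c (n-i) (m-j)) * z ^ i by ring,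
      aux_pow_cancel _ hη hj']
    ring
  rw [L, R]
  conv_lhs => rw [← Finset.sum_range_reflect]
  refine Finset.sum_congr rfl fun i hi => ?_
  have hi' : i < n + 1 := Finset.mem_range.mp hi
  conv_lhs => rw [← Finset.sum_range_reflect]
  refine Finset.sum_congr rfl fun j hj => ?_
  have hj' : j < m + 1 := Finset.mem_range.mp hj
  congr 3 <;> omega

lemma evalP_neg (n m : ℕ) (c : ℕ → ℕ → ℂ) (z w : ℂ) :
    evalP n m (fun i j => -c i j) z w = -evalP n m c z w := by
  simp [evalP, Finset.sum_neg_distrib]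

/-- L = p·A + p̃·B, where A and B are polynomials of degree at most
(n, m-1) in (z,w) and at most m-1 in η̄. -/
theorem statement5 (n m : ℕ) (c : ℕ → ℕ → ℂ)
    (hstable : Stable n m c) (hdeg : DegreeNM n m c)
    (L : ℂ → ℂ → ℂ → ℂ)
    (hL : ∀ z w η : ℂ, z ≠ 0 → (1 - w * star η) * L z w η = Lnum n m c z w η) :
    (∃ α : ℕ → ℕ → ℕ → ℂ, ∀ z w η : ℂ, η ≠ 0 → w * star η ≠ 1 →
      Afun n m c z w η = ∑ i ∈ Finset.range (n + 1), ∑ j ∈ Finset.range m,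
        ∑ k ∈ Finset.range m, α i j k * z ^ i * w ^ j * (star η) ^ k) ∧
    (∃ β : ℕ → ℕ → ℕ → ℂ, ∀ z w η : ℂ, η ≠ 0 → w * star η ≠ 1 →
      Bfun n m c z w η = ∑ i ∈ Finset.range (n + 1), ∑ j ∈ Finset.range m,
        ∑ k ∈ Finset.range m, β i j k * z ^ i * w ^ j * (star η) ^ k) ∧
    (∀ z w η : ℂ, z ≠ 0 → η ≠ 0 → w * star η ≠ 1 →
      L z w η = evalP n m c z w * Afun n m c z w η
        + evalP n m (reflC n m c) z w * Bfun n m c z w η) := by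
  have hAB : ∀ (dd : ℕ → ℕ → ℂ) (z w η : ℂ), η ≠ 0 → w * star η ≠ 1 →
    (star η) ^ m * (evalP n m dd z ((star η)⁻¹) - evalP n m dd z w) / (1 - w * star η)
    = ∑ i ∈ Finset.range (n + 1), ∑ j ∈ Finset.range m, ∑ k ∈ Finset.range m,
        (∑ jj ∈ Finset.range (m+1), ∑ t ∈ Finset.range jj,
          if jj - 1 - t = j ∧ m - 1 - t = k then dd i jj else 0) * z ^ i * w ^ j * (star η) ^ k := by
    intro dd z w η hη h
    exact expand_key n m dd z w (star η) (star_ne_zero.mpr hη) (sub_ne_zero.mpr (Ne.symm h))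
  refine ⟨⟨fun i l k => ∑ jj ∈ Finset.range (m+1), ∑ t ∈ Finset.range jj,
      if jj - 1 - t = l ∧ m - 1 - t = k then reflC n m c i jj else 0, ?_⟩,
    ⟨fun i l k => ∑ jj ∈ Finset.range (m+1), ∑ t ∈ Finset.range jj,
      if jj - 1 - t = l ∧ m - 1 - t = k then -c i jj else 0, ?_⟩, ?_⟩
  · intro z w η hη h
    exact hAB (reflC n m c) z w η hη h
  · intro z w η hη h
    have hB : Bfun n m c z w η
        = (star η) ^ m * (evalP n m (fun i j => -c i j) z ((star η)⁻¹)
            - evalP n m (fun i j => -c i j) z w) / (1 - w * star η) := by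
      unfold Bfun
      rw [evalP_neg, evalP_neg]
      congr 1; ring
    rw [hB]
    exact hAB (fun i j => -c i j) z w η hη h
  · intro z w η hz hη h
    have hx : star η ≠ (0:ℂ) := star_ne_zero.mpr hη
    have h1 : (1:ℂ) - w * star η ≠ 0 := sub_ne_zero.mpr (Ne.symm h)
    have key := hL z w η hz
    have e1 := refl_eval n m c z η hz hx
    have e2 := refl_eval n m (reflC n m c) z η hz hx
    have hrr : evalP n m (reflC n m (reflC n m c)) z ((star η)⁻¹)
        = evalP n m c z ((star η)⁻¹) := by
      unfold evalP
      refine Finset.sum_congr rfl fun i hi => Finset.sum_congr rfl fun j hj => ?_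
      have hi' : i ≤ n := Nat.lt_succ_iff.mp (Finset.mem_range.mp hi)
      have hj' : j ≤ m := Nat.lt_succ_iff.mp (Finset.mem_range.mp hj)
      simp only [reflC, star_star]
      congr 3 <;> omega
    rw [hrr] at e2
    have hA : (1 - w * star η) * Afun n m c z w η
        = (star η) ^ m * (evalP n m (reflC n m c) z ((star η)⁻¹)
            - evalP n m (reflC n m c) z w) := by
      unfold Afun; rw [mul_comm, div_mul_cancel₀ _ h1]
    have hB' : (1 - w * star η) * Bfun n m c z w η
        = (star η) ^ m * (evalP n m c z w - evalP n m c z ((star η)⁻¹)) := by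
      unfold Bfun; rw [mul_comm, div_mul_cancel₀ _ h1]
    apply mul_left_cancel₀ h1
    rw [key]
    have expand : (1 - w * star η) * (evalP n m c z w * Afun n m c z w η
          + evalP n m (reflC n m c) z w * Bfun n m c z w η)
        = evalP n m c z w * ((1 - w * star η) * Afun n m c z w η)
          + evalP n m (reflC n m c) z w * ((1 - w * star η) * Bfun n m c z w η) := by ring
    rw [expand, hA, hB']
    unfold Lnum
    calc z ^ n * (evalP n m c z w * star (evalP n m c (star z)⁻¹ η)
          - evalP n m (reflC n m c) z w * star (evalP n m (reflC n m c) (star z)⁻¹ η))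
        = evalP n m c z w * (z ^ n * star (evalP n m c (star z)⁻¹ η))
          - evalP n m (reflC n m c) z w
            * (z ^ n * star (evalP n m (reflC n m c) (star z)⁻¹ η)) := by ring
      _ = evalP n m c z w * ((star η) ^ m * evalP n m (reflC n m c) z ((star η)⁻¹))
          - evalP n m (reflC n m c) z w
            * ((star η) ^ m * evalP n m c z ((star η)⁻¹)) := by rw [e1, e2]
      _ = evalP n m c z w * ((star η) ^ m * (evalP n m (reflC n m c) z ((star η)⁻¹)
            - evalP n m (reflC n m c) z w))
          + evalP n m (reflC n m c) z w * ((star η) ^ m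
            * (evalP n m c z w - evalP n m c z ((star η)⁻¹))) := by ring
end

section
/- Let p be stable of degree (n,m). The set {z^i w^j p̃ : i,j ≥ 0} is an orthonormal basis (in L²(dσ/|p|²)) of the orthogonal complement of H = closed span{z^i w^j : (0,0) ≤ (i,j) ≱ (n,m)} inside the closed span of {z^i w^j : i,j ≥ 0}. -/
open Complex MeasureTheory Finset
open scoped ComplexInnerProductSpace

noncomputable section

/-- The measure `dμ = dσ/|p|²` on the torus, realized on the parameter square
`[0,2π]²` with normalized Lebesgue measure. -/
def muT (n m : ℕ) (c : ℕ → ℕ → ℂ) : Measure (ℝ × ℝ) :=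
  ((volume : Measure (ℝ × ℝ)).restrict
      (Set.Icc 0 (2 * Real.pi) ×ˢ Set.Icc 0 (2 * Real.pi))).withDensity
    fun x => ENNReal.ofReal
      (1 / ((2 * Real.pi) ^ 2 * Complex.normSq (onT n m c x.1 x.2)))

end

lemma orth_closure {E : Type*} [NormedAddCommGroup E] [InnerProductSpace ℂ E] [CompleteSpace E]
    (K : Submodule ℂ E) : (K.topologicalClosure)ᗮ = Kᗮ := by
  rw [← Submodule.orthogonal_orthogonal_eq_closure]
  exact le_antisymm (Submodule.orthogonal_le K.le_orthogonal_orthogonal)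
    Kᗮ.le_orthogonal_orthogonal

lemma hilbert_key {E : Type*} [NormedAddCommGroup E] [InnerProductSpace ℂ E] [CompleteSpace E]
    (A B C : Submodule ℂ E) (hAC : A ≤ C) (hAB : A ≤ Bᗮ)
    (hC : C ≤ (A ⊔ B).topologicalClosure) :
    A.topologicalClosure = C.topologicalClosure ⊓ (B.topologicalClosure)ᗮ := by
  rw [orth_closure]
  have hAbar_B : A.topologicalClosure ≤ Bᗮ :=
    Submodule.topologicalClosure_minimal _ hAB B.isClosed_orthogonal
  apply le_antisymm
  · exact le_inf (Submodule.topologicalClosure_mono hAC) hAbar_B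
  · rintro x ⟨hxC, hxB⟩
    set Abar := A.topologicalClosure with hA
    haveI : CompleteSpace Abar := A.isClosed_topologicalClosure.completeSpace_coe
    set W := (A ⊔ B).topologicalClosure with hW
    have hxW : x ∈ W := by
      have : C.topologicalClosure ≤ W :=
        Submodule.topologicalClosure_minimal _ hC (Submodule.isClosed_topologicalClosure _)
      exact this hxC
    set y : E := (Abar.orthogonalProjectionOnto x : E) with hy
    have hyA : y ∈ Abar := Submodule.coe_mem _
    have hsub : x - y ∈ Abarᗮ := Abar.sub_starProjection_mem_orthogonal x
    have hsubA : x - y ∈ Aᗮ := by rwa [hA, orth_closure] at hsub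
    have hsubB : x - y ∈ Bᗮ := Submodule.sub_mem _ hxB (hAbar_B hyA)
    have hsubW : x - y ∈ Wᗮ := by
      rw [hW, orth_closure, ← Submodule.inf_orthogonal]
      exact ⟨hsubA, hsubB⟩
    have hyW : y ∈ W := by
      have : Abar ≤ W := Submodule.topologicalClosure_mono le_sup_left
      exact this hyA
    have : x - y ∈ W ⊓ Wᗮ := ⟨Submodule.sub_mem _ hxW hyW, hsubW⟩
    rw [Submodule.inf_orthogonal_eq_bot, Submodule.mem_bot, sub_eq_zero] at this
    rw [this]; exact hyA


noncomputable section
abbrev cE (θ : ℝ) : ℂ := Complex.exp ((θ:ℂ) * Complex.I)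

lemma norm_cE (θ : ℝ) : ‖cE θ‖ = 1 := by
  simp [Complex.norm_exp]

lemma cE_ne (θ : ℝ) : cE θ ≠ 0 := Complex.exp_ne_zero _

lemma tmono_eq_zpow (i j : ℤ) (θ φ : ℝ) :
    tmono i j θ φ = cE θ ^ i * cE φ ^ j := by
  rw [tmono, ← Complex.exp_int_mul, ← Complex.exp_int_mul, ← Complex.exp_add]
  congr 1; ring

lemma tmono_mul (i j k l : ℤ) (θ φ : ℝ) :
    tmono i j θ φ * tmono k l θ φ = tmono (i+k) (j+l) θ φ := by
  simp only [tmono, ← Complex.exp_add]; congr 1; push_cast; ring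

lemma tmono_conj (i j : ℤ) (θ φ : ℝ) :
    star (tmono i j θ φ) = tmono (-i) (-j) θ φ := by
  simp only [tmono]
  push_cast
  rw [show ((-(i:ℂ)) * (θ:ℂ) + (-(j:ℂ)) * (φ:ℂ)) * Complex.I
      = -(((i:ℂ) * (θ:ℂ) + (j:ℂ) * (φ:ℂ)) * Complex.I) by ring]
  rw [Complex.star_def, ← Complex.exp_conj]
  congr 1
  simp [Complex.conj_I]

lemma continuous_tmono (i j : ℤ) : Continuous (fun x : ℝ × ℝ => tmono i j x.1 x.2) := by
  unfold tmono; fun_prop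

lemma continuous_onT (n m : ℕ) (c : ℕ → ℕ → ℂ) :
    Continuous (fun x : ℝ × ℝ => onT n m c x.1 x.2) := by
  unfold onT evalP
  apply continuous_finset_sum; intro i _
  apply continuous_finset_sum; intro j _
  fun_prop

lemma evalP_diff1 (n m : ℕ) (c : ℕ → ℕ → ℂ) (w : ℂ) :
    Differentiable ℂ (fun z => evalP n m c z w) := by
  unfold evalP
  apply Differentiable.fun_sum; intro i _
  apply Differentiable.fun_sum; intro j _
  fun_prop

lemma evalP_diff2 (n m : ℕ) (c : ℕ → ℕ → ℂ) (z : ℂ) :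
    Differentiable ℂ (fun w => evalP n m c z w) := by
  unfold evalP
  apply Differentiable.fun_sum; intro i _
  apply Differentiable.fun_sum; intro j _
  fun_prop

lemma onT_ne (n m : ℕ) (c : ℕ → ℕ → ℂ) (h : Stable n m c) (θ φ : ℝ) :
    onT n m c θ φ ≠ 0 := h _ _ (norm_cE θ).le (norm_cE φ).le

/-- reflection identity on the torus -/
lemma onT_reflC (n m : ℕ) (c : ℕ → ℕ → ℂ) (θ φ : ℝ) :
    onT n m (reflC n m c) θ φ = tmono n m θ φ * star (onT n m c θ φ) := by
  have hz : star (cE θ) = (cE θ)⁻¹ := by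
    rw [Complex.inv_def]
    have : Complex.normSq (cE θ) = 1 := by
      rw [← Complex.sq_norm]; simp [norm_cE]
    simp [this, RingHom.coe_coe]
  have hw : star (cE φ) = (cE φ)⁻¹ := by
    rw [Complex.inv_def]
    have : Complex.normSq (cE φ) = 1 := by
      rw [← Complex.sq_norm]; simp [norm_cE]
    simp [this, RingHom.coe_coe]
  rw [tmono_eq_zpow]
  show evalP n m (reflC n m c) (cE θ) (cE φ)
      = cE θ ^ (n:ℤ) * cE φ ^ (m:ℤ) * star (evalP n m c (cE θ) (cE φ))
  rw [zpow_natCast, zpow_natCast]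
  unfold evalP reflC
  rw [star_sum]
  simp only [star_sum, star_mul', star_pow, hz, hw, Finset.mul_sum]
  rw [← Finset.sum_range_reflect]
  apply Finset.sum_congr rfl
  intro i hi
  rw [← Finset.sum_range_reflect]
  apply Finset.sum_congr rfl
  intro j hj
  have hi' : i ≤ n := Nat.lt_succ_iff.mp (Finset.mem_range.mp hi)
  have hj' : j ≤ m := Nat.lt_succ_iff.mp (Finset.mem_range.mp hj)
  have h1 : n + 1 - 1 - i = n - i := by omega
  have h2 : m + 1 - 1 - j = m - j := by omega
  rw [h1, h2]
  have h3 : n - (n - i) = i := by omega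
  have h4 : m - (m - j) = j := by omega
  rw [h3, h4]
  have h5 : cE θ ^ (n - i) = cE θ ^ n * ((cE θ)⁻¹) ^ i := by
    rw [inv_pow, eq_comm, mul_inv_eq_iff_eq_mul₀ (pow_ne_zero _ (cE_ne θ)), ← pow_add]
    congr 1; omega
  have h6 : cE φ ^ (m - j) = cE φ ^ m * ((cE φ)⁻¹) ^ j := by
    rw [inv_pow, eq_comm, mul_inv_eq_iff_eq_mul₀ (pow_ne_zero _ (cE_ne φ)), ← pow_add]
    congr 1; omega
  rw [h5, h6]; ring

lemma normSq_onT_reflC (n m : ℕ) (c : ℕ → ℕ → ℂ) (θ φ : ℝ) :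
    Complex.normSq (onT n m (reflC n m c) θ φ) = Complex.normSq (onT n m c θ φ) := by
  rw [onT_reflC, Complex.normSq_mul, tmono_eq_zpow]
  have h1 : Complex.normSq (cE θ ^ (n:ℤ) * cE φ ^ (m:ℤ)) = 1 := by
    rw [Complex.normSq_mul]
    have : ∀ (θ : ℝ) (k : ℤ), Complex.normSq (cE θ ^ k) = 1 := by
      intro θ k
      rw [← Complex.sq_norm, norm_zpow, norm_cE]
      simp
    rw [this, this]; ring
  rw [h1, one_mul]
  exact Complex.normSq_conj _

abbrev TS : Set (ℝ × ℝ) := Set.Icc 0 (2 * Real.pi) ×ˢ Set.Icc 0 (2 * Real.pi)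

lemma integral_muT (n m : ℕ) (c : ℕ → ℕ → ℂ) (f : ℝ × ℝ → ℂ) :
    ∫ x, f x ∂(muT n m c)
      = ∫ x in TS, ((1 / ((2 * Real.pi) ^ 2 * Complex.normSq (onT n m c x.1 x.2)) : ℝ)) • f x := by
  rw [muT]
  have hd : Measurable fun x : ℝ × ℝ =>
      Real.toNNReal (1 / ((2 * Real.pi) ^ 2 * Complex.normSq (onT n m c x.1 x.2))) := by
    apply Measurable.real_toNNReal
    exact Measurable.div measurable_const
      ((continuous_const.mul (Complex.continuous_normSq.comp (continuous_onT n m c))).measurable)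
  rw [show (fun x : ℝ × ℝ => ENNReal.ofReal
      (1 / ((2 * Real.pi) ^ 2 * Complex.normSq (onT n m c x.1 x.2))))
    = fun x => ((Real.toNNReal (1 / ((2 * Real.pi) ^ 2 * Complex.normSq (onT n m c x.1 x.2))) : NNReal) : ENNReal) from rfl]
  rw [integral_withDensity_eq_integral_smul hd]
  apply setIntegral_congr_fun (by measurability)
  intro x _
  simp only
  rw [NNReal.smul_def, Real.coe_toNNReal]
  exact div_nonneg zero_le_one (mul_nonneg (by positivity) (Complex.normSq_nonneg _))

open intervalIntegral Metric

lemma int_exp_1d (k : ℤ) :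
    ∫ θ in (0:ℝ)..(2*Real.pi), Complex.exp ((k:ℂ) * (θ:ℂ) * Complex.I)
      = if k = 0 then (2*Real.pi : ℂ) else 0 := by
  split_ifs with h
  · subst h; simp
  · have hc : (k:ℂ) * Complex.I ≠ 0 := by simp [Complex.ext_iff, h]
    have h1 : (∫ θ in (0:ℝ)..(2*Real.pi), Complex.exp ((k:ℂ) * (θ:ℂ) * Complex.I))
        = ∫ θ in (0:ℝ)..(2*Real.pi), Complex.exp (((k:ℂ)*Complex.I) * (θ:ℂ)) :=
      intervalIntegral.integral_congr (fun θ _ => by ring_nf)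
    rw [h1, integral_exp_mul_complex hc]
    rw [show ((k:ℂ)*Complex.I*((2*Real.pi:ℝ):ℂ)) = (k:ℂ)*(2*Real.pi*Complex.I) by push_cast; ring]
    simp [Complex.exp_int_mul_two_pi_mul_I]

lemma cauchy_1d (g : ℂ → ℂ) (hg : Differentiable ℂ g)
    (hg0 : ∀ z : ℂ, ‖z‖ ≤ 1 → g z ≠ 0) (a : ℕ) :
    ∫ θ in (0:ℝ)..(2*Real.pi),
      Complex.exp (((a:ℂ)+1) * (θ:ℂ) * Complex.I) / g (Complex.exp ((θ:ℂ) * Complex.I)) = 0 := by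
  have key : (∮ z in C((0:ℂ), 1), z ^ a / g z) = 0 := by
    apply circleIntegral_eq_zero_of_differentiable_on_off_countable zero_le_one
      Set.countable_empty
    · apply ContinuousOn.div (by fun_prop) hg.continuous.continuousOn
      intro z hz
      exact hg0 z (by simpa using mem_closedBall_zero_iff.mp hz)
    · intro z hz
      exact DifferentiableAt.div (by fun_prop) (hg z)
        (hg0 z (le_of_lt (by simpa using (mem_ball_zero_iff.mp hz.1))))
  rw [circleIntegral] at key
  have heq : ∀ θ ∈ Set.uIcc (0:ℝ) (2*Real.pi),
      deriv (circleMap 0 1) θ • (circleMap 0 1 θ ^ a / g (circleMap 0 1 θ))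
      = Complex.I * (Complex.exp (((a:ℂ)+1) * (θ:ℂ) * Complex.I)
        / g (Complex.exp ((θ:ℂ) * Complex.I))) := by
    intro θ _
    rw [deriv_circleMap]
    have hcm : circleMap 0 1 θ = Complex.exp ((θ:ℂ)*Complex.I) := by simp [circleMap]
    rw [hcm, smul_eq_mul]
    have h2 : Complex.exp ((θ:ℂ)*Complex.I) * Complex.exp ((θ:ℂ)*Complex.I) ^ a
        = Complex.exp (((a:ℂ)+1) * (θ:ℂ) * Complex.I) := by
      rw [← Complex.exp_nat_mul, ← Complex.exp_add]
      congr 1; ring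
    field_simp
    rw [h2, show ((θ:ℂ) * Complex.I * ((a:ℂ) + 1)) = ((a:ℂ) + 1) * (θ:ℂ) * Complex.I by ring]
  rw [intervalIntegral.integral_congr heq, intervalIntegral.integral_const_mul] at key
  simpa [Complex.I_ne_zero] using key

lemma tmono_split (a b : ℤ) (θ φ : ℝ) :
    tmono a b θ φ = Complex.exp ((a:ℂ) * (θ:ℂ) * Complex.I)
      * Complex.exp ((b:ℂ) * (φ:ℂ) * Complex.I) := by
  rw [tmono, ← Complex.exp_add]; congr 1; ring

lemma setInt_prod (f : ℝ × ℝ → ℂ) (hf : Continuous f) :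
    ∫ x in TS, f x
      = ∫ θ in (0:ℝ)..(2*Real.pi), ∫ φ in (0:ℝ)..(2*Real.pi), f (θ, φ) := by
  have h2π : (0:ℝ) ≤ 2*Real.pi := by positivity
  rw [Measure.volume_eq_prod, setIntegral_prod _
    (by rw [← Measure.volume_eq_prod]; exact hf.continuousOn.integrableOn_compact (isCompact_Icc.prod isCompact_Icc))]
  rw [integral_Icc_eq_integral_Ioc, ← intervalIntegral.integral_of_le h2π]
  apply intervalIntegral.integral_congr
  intro θ _
  dsimp only
  rw [integral_Icc_eq_integral_Ioc, ← intervalIntegral.integral_of_le h2π]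

lemma setInt_prod_symm (f : ℝ × ℝ → ℂ) (hf : Continuous f) :
    ∫ x in TS, f x
      = ∫ φ in (0:ℝ)..(2*Real.pi), ∫ θ in (0:ℝ)..(2*Real.pi), f (θ, φ) := by
  have h2π : (0:ℝ) ≤ 2*Real.pi := by positivity
  rw [Measure.volume_eq_prod, ← Measure.prod_restrict,
    integral_prod_symm _
      (by rw [Measure.prod_restrict, ← Measure.volume_eq_prod];
          exact hf.continuousOn.integrableOn_compact (isCompact_Icc.prod isCompact_Icc))]
  rw [integral_Icc_eq_integral_Ioc, ← intervalIntegral.integral_of_le h2π]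
  apply intervalIntegral.integral_congr
  intro φ _
  dsimp only
  rw [integral_Icc_eq_integral_Ioc, ← intervalIntegral.integral_of_le h2π]

lemma int_tmono_TS (a b : ℤ) :
    ∫ x in TS, tmono a b x.1 x.2
      = (if a = 0 then (2*Real.pi:ℂ) else 0) * (if b = 0 then (2*Real.pi:ℂ) else 0) := by
  rw [setInt_prod _ (continuous_tmono a b)]
  have hinner : ∀ θ : ℝ, (∫ φ in (0:ℝ)..(2*Real.pi), tmono a b θ φ)
      = Complex.exp ((a:ℂ) * (θ:ℂ) * Complex.I) * (if b = 0 then (2*Real.pi:ℂ) else 0) := by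
    intro θ
    simp_rw [tmono_split]
    rw [intervalIntegral.integral_const_mul, int_exp_1d]
  simp_rw [hinner]
  rw [intervalIntegral.integral_mul_const, int_exp_1d]

lemma int_tmono_div_TS (n m : ℕ) (c : ℕ → ℕ → ℂ) (hs : Stable n m c) (a b : ℤ)
    (h : 1 ≤ a ∨ 1 ≤ b) :
    ∫ x in TS, tmono a b x.1 x.2 / onT n m c x.1 x.2 = 0 := by
  have hcont : Continuous (fun x : ℝ × ℝ => tmono a b x.1 x.2 / onT n m c x.1 x.2) :=
    (continuous_tmono a b).div (continuous_onT n m c) (fun x => onT_ne n m c hs x.1 x.2)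
  rcases h with h | h
  · obtain ⟨a', rfl⟩ : ∃ a' : ℕ, a = (a':ℤ) + 1 := ⟨(a-1).toNat, by omega⟩
    rw [setInt_prod_symm _ hcont]
    have hinner : ∀ φ : ℝ, (∫ θ in (0:ℝ)..(2*Real.pi), tmono ((a':ℤ)+1) b θ φ / onT n m c θ φ)
        = 0 := by
      intro φ
      have : ∀ θ : ℝ, tmono ((a':ℤ)+1) b θ φ / onT n m c θ φ
          = Complex.exp ((b:ℂ) * (φ:ℂ) * Complex.I)
            * (Complex.exp (((a':ℂ)+1) * (θ:ℂ) * Complex.I)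
              / (fun z => evalP n m c z (cE φ)) (Complex.exp ((θ:ℂ) * Complex.I))) := by
        intro θ
        rw [tmono_split]
        show _ = _ * (_ / evalP n m c (cE θ) (cE φ))
        unfold onT
        push_cast
        ring
      simp_rw [this]
      rw [intervalIntegral.integral_const_mul,
        cauchy_1d _ (evalP_diff1 n m c (cE φ))
          (fun z hz => hs z (cE φ) hz (norm_cE φ).le) a', mul_zero]
    simp_rw [hinner, intervalIntegral.integral_zero]
  · obtain ⟨b', rfl⟩ : ∃ b' : ℕ, b = (b':ℤ) + 1 := ⟨(b-1).toNat, by omega⟩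
    rw [setInt_prod _ hcont]
    have hinner : ∀ θ : ℝ, (∫ φ in (0:ℝ)..(2*Real.pi), tmono a ((b':ℤ)+1) θ φ / onT n m c θ φ)
        = 0 := by
      intro θ
      have : ∀ φ : ℝ, tmono a ((b':ℤ)+1) θ φ / onT n m c θ φ
          = Complex.exp ((a:ℂ) * (θ:ℂ) * Complex.I)
            * (Complex.exp (((b':ℂ)+1) * (φ:ℂ) * Complex.I)
              / (fun w => evalP n m c (cE θ) w) (Complex.exp ((φ:ℂ) * Complex.I))) := by
        intro φ
        rw [tmono_split]
        show _ = _ * (_ / evalP n m c (cE θ) (cE φ))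
        unfold onT
        push_cast
        ring
      simp_rw [this]
      rw [intervalIntegral.integral_const_mul,
        cauchy_1d _ (evalP_diff2 n m c (cE θ))
          (fun w hw => hs (cE θ) w (norm_cE θ).le hw) b', mul_zero]
    simp_rw [hinner, intervalIntegral.integral_zero]

open scoped ComplexInnerProductSpace

lemma inner_eq (n m : ℕ) (c : ℕ → ℕ → ℂ) (f g : Lp ℂ 2 (muT n m c)) (F G : ℝ × ℝ → ℂ)
    (hf : ⇑f =ᵐ[muT n m c] F) (hg : ⇑g =ᵐ[muT n m c] G) :
    ⟪f, g⟫ = ∫ x in TS,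
      ((1 / ((2 * Real.pi) ^ 2 * Complex.normSq (onT n m c x.1 x.2)) : ℝ))
        • (starRingEnd ℂ (F x) * G x) := by
  rw [MeasureTheory.L2.inner_def]
  rw [show (∫ a, ⟪f a, g a⟫ ∂(muT n m c)) = ∫ a, starRingEnd ℂ (F a) * G a ∂(muT n m c) by
    apply MeasureTheory.integral_congr_ae
    filter_upwards [hf, hg] with x hx1 hx2
    rw [RCLike.inner_apply, hx1, hx2, mul_comm]]
  exact integral_muT n m c _

lemma pi_ne : (2 * Real.pi : ℂ) ≠ 0 := by
  simp [Complex.ext_iff, Real.pi_ne_zero]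

lemma inner_bb (n m : ℕ) (c : ℕ → ℕ → ℂ) (hs : Stable n m c)
    (f g : Lp ℂ 2 (muT n m c)) (i j k l : ℕ)
    (hf : ⇑f =ᵐ[muT n m c] fun x => tmono (i:ℤ) (j:ℤ) x.1 x.2 * onT n m (reflC n m c) x.1 x.2)
    (hg : ⇑g =ᵐ[muT n m c] fun x => tmono (k:ℤ) (l:ℤ) x.1 x.2 * onT n m (reflC n m c) x.1 x.2) :
    ⟪f, g⟫ = if i = k ∧ j = l then 1 else 0 := by
  rw [inner_eq n m c f g _ _ hf hg]
  have hpt : ∀ x : ℝ × ℝ,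
      ((1 / ((2 * Real.pi) ^ 2 * Complex.normSq (onT n m c x.1 x.2)) : ℝ))
        • (starRingEnd ℂ (tmono (i:ℤ) (j:ℤ) x.1 x.2 * onT n m (reflC n m c) x.1 x.2)
          * (tmono (k:ℤ) (l:ℤ) x.1 x.2 * onT n m (reflC n m c) x.1 x.2))
      = ((1 / (2 * Real.pi) ^ 2 : ℝ)) • tmono ((k:ℤ)-(i:ℤ)) ((l:ℤ)-(j:ℤ)) x.1 x.2 := by
    intro ⟨θ, φ⟩
    have hP := onT_ne n m c hs θ φ
    have hnP : (Complex.normSq (onT n m c θ φ) : ℝ) ≠ 0 := (Complex.normSq_pos.mpr hP).ne'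
    simp only
    rw [map_mul]
    rw [show starRingEnd ℂ (tmono (i:ℤ) (j:ℤ) θ φ) = star (tmono (i:ℤ) (j:ℤ) θ φ) from rfl,
      tmono_conj]
    rw [Complex.real_smul, Complex.real_smul]
    have hQ : starRingEnd ℂ (onT n m (reflC n m c) θ φ) * onT n m (reflC n m c) θ φ
        = (Complex.normSq (onT n m c θ φ) : ℂ) := by
      rw [← Complex.normSq_eq_conj_mul_self, normSq_onT_reflC]
    have hmul : tmono (-(i:ℤ)) (-(j:ℤ)) θ φ * tmono (k:ℤ) (l:ℤ) θ φ
        = tmono ((k:ℤ)-(i:ℤ)) ((l:ℤ)-(j:ℤ)) θ φ := by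
      rw [tmono_mul]; congr 1 <;> ring
    push_cast
    rw [show ∀ A B Q1 Q2 : ℂ, A * Q1 * (B * Q2) = (A * B) * (Q1 * Q2) from fun _ _ _ _ => by ring]
    rw [hmul]
    rw [show (starRingEnd ℂ) (onT n m (reflC n m c) θ φ) * onT n m (reflC n m c) θ φ
        = (Complex.normSq (onT n m c θ φ) : ℂ) from hQ]
    have h2 : (Complex.normSq (onT n m c θ φ) : ℂ) ≠ 0 := by
      simpa using hnP
    field_simp
  rw [MeasureTheory.integral_congr_ae (Filter.Eventually.of_forall hpt),
    MeasureTheory.integral_smul, int_tmono_TS]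
  by_cases hik : i = k
  · by_cases hjl : j = l
    · subst hik; subst hjl
      simp only [sub_self, if_pos rfl, and_self, if_pos rfl]
      rw [Complex.real_smul]
      push_cast
      have hπ : (Real.pi:ℂ) ≠ 0 := Complex.ofReal_ne_zero.mpr Real.pi_ne_zero
      field_simp
    · have : ((l:ℤ) - (j:ℤ)) ≠ 0 := by omega
      simp [this, hjl]
  · have : ((k:ℤ) - (i:ℤ)) ≠ 0 := by omega
    simp [this, hik]

lemma inner_Mb (n m : ℕ) (c : ℕ → ℕ → ℂ) (hs : Stable n m c)
    (f g : Lp ℂ 2 (muT n m c)) (k l i j : ℕ) (hkl : k < n ∨ l < m)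
    (hf : ⇑f =ᵐ[muT n m c] fun x => tmono (k:ℤ) (l:ℤ) x.1 x.2)
    (hg : ⇑g =ᵐ[muT n m c] fun x => tmono (i:ℤ) (j:ℤ) x.1 x.2 * onT n m (reflC n m c) x.1 x.2) :
    ⟪f, g⟫ = 0 := by
  rw [inner_eq n m c f g _ _ hf hg]
  have hpt : ∀ x : ℝ × ℝ,
      ((1 / ((2 * Real.pi) ^ 2 * Complex.normSq (onT n m c x.1 x.2)) : ℝ))
        • (starRingEnd ℂ (tmono (k:ℤ) (l:ℤ) x.1 x.2)
          * (tmono (i:ℤ) (j:ℤ) x.1 x.2 * onT n m (reflC n m c) x.1 x.2))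
      = ((1 / (2 * Real.pi) ^ 2 : ℝ))
          • (tmono ((i:ℤ)+(n:ℤ)-(k:ℤ)) ((j:ℤ)+(m:ℤ)-(l:ℤ)) x.1 x.2 / onT n m c x.1 x.2) := by
    intro ⟨θ, φ⟩
    have hP := onT_ne n m c hs θ φ
    have hnP : (Complex.normSq (onT n m c θ φ) : ℝ) ≠ 0 := (Complex.normSq_pos.mpr hP).ne'
    simp only
    rw [show starRingEnd ℂ (tmono (k:ℤ) (l:ℤ) θ φ) = star (tmono (k:ℤ) (l:ℤ) θ φ) from rfl,
      tmono_conj]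
    rw [Complex.real_smul, Complex.real_smul]
    rw [onT_reflC]
    have hmul : tmono (-(k:ℤ)) (-(l:ℤ)) θ φ * (tmono (i:ℤ) (j:ℤ) θ φ * (tmono (n:ℤ) (m:ℤ) θ φ
        * star (onT n m c θ φ)))
        = tmono ((i:ℤ)+(n:ℤ)-(k:ℤ)) ((j:ℤ)+(m:ℤ)-(l:ℤ)) θ φ * star (onT n m c θ φ) := by
      rw [show tmono (-(k:ℤ)) (-(l:ℤ)) θ φ * (tmono (i:ℤ) (j:ℤ) θ φ * (tmono (n:ℤ) (m:ℤ) θ φ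
          * star (onT n m c θ φ)))
        = (tmono (-(k:ℤ)) (-(l:ℤ)) θ φ * tmono (i:ℤ) (j:ℤ) θ φ) * tmono (n:ℤ) (m:ℤ) θ φ
          * star (onT n m c θ φ) from by ring, tmono_mul, tmono_mul]
      congr 2 <;> ring
    rw [hmul]
    have h2 : (Complex.normSq (onT n m c θ φ) : ℂ) ≠ 0 := by simpa using hnP
    rw [show star (onT n m c θ φ) = starRingEnd ℂ (onT n m c θ φ) from rfl]
    have hinv : (onT n m c θ φ)⁻¹
        = starRingEnd ℂ (onT n m c θ φ) * ((Complex.normSq (onT n m c θ φ) : ℝ) : ℂ)⁻¹ := by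
      rw [Complex.inv_def]; push_cast; ring
    rw [show tmono ((i:ℤ)+(n:ℤ)-(k:ℤ)) ((j:ℤ)+(m:ℤ)-(l:ℤ)) θ φ / onT n m c θ φ
        = tmono ((i:ℤ)+(n:ℤ)-(k:ℤ)) ((j:ℤ)+(m:ℤ)-(l:ℤ)) θ φ * (onT n m c θ φ)⁻¹ from
      div_eq_mul_inv _ _, hinv]
    push_cast
    have hπ : (Real.pi:ℂ) ≠ 0 := Complex.ofReal_ne_zero.mpr Real.pi_ne_zero
    field_simp
  rw [MeasureTheory.integral_congr_ae (Filter.Eventually.of_forall hpt),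
    MeasureTheory.integral_smul,
    int_tmono_div_TS n m c hs _ _ (Or.imp (fun h => by omega) (fun h => by omega) hkl)]
  simp

lemma Lp_coeFn_sum {α : Type*} [MeasurableSpace α] {μ : Measure α} {ι : Type*}
    (s : Finset ι) (f : ι → Lp ℂ 2 μ) :
    ⇑(∑ i ∈ s, f i) =ᵐ[μ] fun x => ∑ i ∈ s, f i x := by
  induction s using Finset.cons_induction with
  | empty => simp only [Finset.sum_empty]; exact Lp.coeFn_zero ℂ 2 μ
  | cons a s ha ih =>
    rw [Finset.sum_cons]
    filter_upwards [Lp.coeFn_add (f a) (∑ i ∈ s, f i), ih] with x h1 h2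
    rw [h1]
    simp only [Pi.add_apply, h2, Finset.sum_cons]

lemma expand_b (n m : ℕ) (c : ℕ → ℕ → ℂ) (i j : ℕ) (θ φ : ℝ) :
    tmono (i:ℤ) (j:ℤ) θ φ * onT n m (reflC n m c) θ φ
    = ∑ p ∈ Finset.range (n+1) ×ˢ Finset.range (m+1),
        reflC n m c p.1 p.2 * tmono ((i + p.1 : ℕ):ℤ) ((j + p.2 : ℕ):ℤ) θ φ := by
  rw [Finset.sum_product]
  unfold onT evalP
  rw [Finset.mul_sum]
  apply Finset.sum_congr rfl
  intro s _
  rw [Finset.mul_sum]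
  apply Finset.sum_congr rfl
  intro t _
  have h1 : tmono ((i + s : ℕ):ℤ) ((j + t : ℕ):ℤ) θ φ
      = tmono (i:ℤ) (j:ℤ) θ φ * tmono (s:ℤ) (t:ℤ) θ φ := by
    rw [tmono_mul]
    congr 1 <;> push_cast <;> ring
  have h2 : tmono (s:ℤ) (t:ℤ) θ φ = cE θ ^ s * cE φ ^ t := by
    rw [tmono_eq_zpow, zpow_natCast, zpow_natCast]
  rw [h1, h2]
  ring

lemma evalP_zero (n m : ℕ) (c : ℕ → ℕ → ℂ) : evalP n m c 0 0 = c 0 0 := by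
  unfold evalP
  rw [Finset.sum_eq_single 0]
  · rw [Finset.sum_eq_single 0]
    · simp
    · intro t _ ht; simp [zero_pow ht]
    · intro h; exact absurd (Finset.mem_range.mpr (Nat.succ_pos m)) h
  · intro s _ hs
    apply Finset.sum_eq_zero
    intro t _
    simp [zero_pow hs]
  · intro h; exact absurd (Finset.mem_range.mpr (Nat.succ_pos n)) h

lemma c00_ne (n m : ℕ) (c : ℕ → ℕ → ℂ) (hs : Stable n m c) : c 0 0 ≠ 0 := by
  have := hs 0 0 (by simp) (by simp)
  rwa [evalP_zero] at this

end

/-- {z^i w^j p̃ : i,j ≥ 0} is an orthonormal basis of the orthogonal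
complement of the closed span of {z^i w^j : i,j ≥ 0, (i,j) ≱ (n,m)} inside the closed
span of all monomials {z^i w^j : i,j ≥ 0}. -/
theorem statement15 (n m : ℕ) (c : ℕ → ℕ → ℂ)
    (hstable : Stable n m c) (hdeg : DegreeNM n m c)
    (M : ℤ → ℤ → Lp ℂ 2 (muT n m c))
    (hM : ∀ i j : ℤ, (M i j : ℝ × ℝ → ℂ) =ᵐ[muT n m c] fun x => tmono i j x.1 x.2)
    (b : ℕ → ℕ → Lp ℂ 2 (muT n m c))
    (hb : ∀ i j : ℕ, (b i j : ℝ × ℝ → ℂ) =ᵐ[muT n m c]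
      fun x => tmono (i : ℤ) (j : ℤ) x.1 x.2 * onT n m (reflC n m c) x.1 x.2) :
    Orthonormal ℂ (fun q : ℕ × ℕ => b q.1 q.2)
    ∧ (Submodule.span ℂ (Set.range fun q : ℕ × ℕ => b q.1 q.2)).topologicalClosure
        = (Submodule.span ℂ
              {f | ∃ i j : ℕ, f = M (i : ℤ) (j : ℤ)}).topologicalClosure
          ⊓ ((Submodule.span ℂ
              {f | ∃ i j : ℕ, (i < n ∨ j < m) ∧ f = M (i : ℤ) (j : ℤ)}).topologicalClosure)ᗮ := by
  have hbsum : ∀ i j : ℕ, b i j = ∑ p ∈ Finset.range (n+1) ×ˢ Finset.range (m+1),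
      reflC n m c p.1 p.2 • M ((i + p.1 : ℕ):ℤ) ((j + p.2 : ℕ):ℤ) := by
    intro i j
    apply Lp.ext
    have h1 := Lp_coeFn_sum (Finset.range (n+1) ×ˢ Finset.range (m+1))
      (fun p => reflC n m c p.1 p.2 • M ((i + p.1 : ℕ):ℤ) ((j + p.2 : ℕ):ℤ))
    have h2 : ∀ᵐ x ∂(muT n m c),
        ∀ p ∈ ((Finset.range (n+1) ×ˢ Finset.range (m+1) : Finset (ℕ×ℕ)) : Set (ℕ×ℕ)),
        (reflC n m c p.1 p.2 • M ((i + p.1 : ℕ):ℤ) ((j + p.2 : ℕ):ℤ)) x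
          = reflC n m c p.1 p.2 * tmono ((i + p.1 : ℕ):ℤ) ((j + p.2 : ℕ):ℤ) x.1 x.2 := by
      rw [MeasureTheory.ae_ball_iff (Finset.countable_toSet _)]
      intro p _
      filter_upwards [Lp.coeFn_smul (reflC n m c p.1 p.2) (M ((i + p.1:ℕ):ℤ) ((j + p.2:ℕ):ℤ)),
        hM ((i + p.1:ℕ):ℤ) ((j + p.2:ℕ):ℤ)] with x hx1 hx2
      rw [hx1]
      simp only [Pi.smul_apply, hx2, smul_eq_mul]
    filter_upwards [hb i j, h1, h2] with x hx1 hx2 hx3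
    rw [hx1, hx2, expand_b n m c i j x.1 x.2]
    exact Finset.sum_congr rfl (fun p hp => (hx3 p (Finset.mem_coe.mpr hp)).symm)
  have hc00 : (starRingEnd ℂ) (c 0 0) ≠ 0 := by
    simpa using c00_ne n m c hstable
  have hmem : ∀ k : ℕ, ∀ i j : ℕ, i + j = k →
      M (i:ℤ) (j:ℤ) ∈ (Submodule.span ℂ (Set.range fun q : ℕ × ℕ => b q.1 q.2))
        ⊔ (Submodule.span ℂ {f | ∃ i j : ℕ, (i < n ∨ j < m) ∧ f = M (i:ℤ) (j:ℤ)}) := by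
    intro k
    induction k using Nat.strong_induction_on with
    | _ k ih =>
      intro i j hk
      by_cases hlow : i < n ∨ j < m
      · exact Submodule.mem_sup_right (Submodule.subset_span ⟨i, j, hlow, rfl⟩)
      · push_neg at hlow
        obtain ⟨hni, hmj⟩ := hlow
        have hsum := hbsum (i - n) (j - m)
        have hnm : ((n, m) : ℕ×ℕ) ∈ Finset.range (n+1) ×ˢ Finset.range (m+1) := by
          simp
        rw [← Finset.add_sum_erase _ _ hnm] at hsum
        have hidx1 : (i - n + n) = i := by omega
        have hidx2 : (j - m + m) = j := by omega
        have hcoeff : reflC n m c n m = starRingEnd ℂ (c 0 0) := by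
          simp [reflC]
        rw [hidx1, hidx2, hcoeff] at hsum
        have heq : (starRingEnd ℂ) (c 0 0) • M (i:ℤ) (j:ℤ)
            = b (i-n) (j-m) - ∑ p ∈ (Finset.range (n+1) ×ˢ Finset.range (m+1)).erase (n, m),
                reflC n m c p.1 p.2 • M ((i - n + p.1 : ℕ):ℤ) ((j - m + p.2 : ℕ):ℤ) :=
          eq_sub_of_add_eq hsum.symm
        have hrest : b (i-n) (j-m) - ∑ p ∈ (Finset.range (n+1) ×ˢ Finset.range (m+1)).erase (n, m),
                reflC n m c p.1 p.2 • M ((i - n + p.1 : ℕ):ℤ) ((j - m + p.2 : ℕ):ℤ)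
            ∈ (Submodule.span ℂ (Set.range fun q : ℕ × ℕ => b q.1 q.2))
              ⊔ (Submodule.span ℂ {f | ∃ i j : ℕ, (i < n ∨ j < m) ∧ f = M (i:ℤ) (j:ℤ)}) := by
          apply Submodule.sub_mem
          · exact Submodule.mem_sup_left (Submodule.subset_span ⟨(i-n, j-m), rfl⟩)
          · apply Submodule.sum_mem
            intro p hp
            apply Submodule.smul_mem
            have hp' := Finset.mem_erase.mp hp
            have hpr : p.1 ≤ n ∧ p.2 ≤ m := by
              have := Finset.mem_product.mp hp'.2
              constructor <;> [exact Nat.lt_succ_iff.mp (Finset.mem_range.mp this.1);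
                exact Nat.lt_succ_iff.mp (Finset.mem_range.mp this.2)]
            have hlt : (i - n + p.1) + (j - m + p.2) < k := by
              have hne : p ≠ (n, m) := hp'.1
              have : p.1 ≠ n ∨ p.2 ≠ m := by
                by_contra hco
                push_neg at hco
                exact hne (Prod.ext hco.1 hco.2)
              omega
            exact ih _ hlt _ _ rfl
        have : M (i:ℤ) (j:ℤ) = ((starRingEnd ℂ) (c 0 0))⁻¹
            • ((starRingEnd ℂ) (c 0 0) • M (i:ℤ) (j:ℤ)) := (inv_smul_smul₀ hc00 _).symm
        rw [this, heq]
        exact Submodule.smul_mem _ _ hrest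
  constructor
  · rw [orthonormal_iff_ite]
    intro q r
    rw [show ⟪(fun q : ℕ×ℕ => b q.1 q.2) q, (fun q : ℕ×ℕ => b q.1 q.2) r⟫
        = if q.1 = r.1 ∧ q.2 = r.2 then (1:ℂ) else 0 from
      inner_bb n m c hstable _ _ q.1 q.2 r.1 r.2 (hb _ _) (hb _ _)]
    simp [Prod.ext_iff]
  · apply hilbert_key
    · rw [Submodule.span_le]
      rintro _ ⟨q, rfl⟩
      show b q.1 q.2 ∈ _
      rw [hbsum q.1 q.2]
      exact Submodule.sum_mem _ fun p hp => Submodule.smul_mem _ _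
        (Submodule.subset_span ⟨q.1 + p.1, q.2 + p.2, rfl⟩)
    · rw [Submodule.span_le]
      rintro _ ⟨q, rfl⟩
      show b q.1 q.2 ∈ _
      rw [SetLike.mem_coe, Submodule.mem_orthogonal]
      intro u hu
      induction hu using Submodule.span_induction with
      | mem x hx =>
        obtain ⟨k, l, hkl, rfl⟩ := hx
        exact inner_Mb n m c hstable _ _ k l q.1 q.2 hkl (hM _ _) (hb _ _)
      | zero => exact inner_zero_left _
      | add x y hx hy ihx ihy => rw [inner_add_left, ihx, ihy, add_zero]
      | smul r x hx ihx => rw [inner_smul_left, ihx, mul_zero]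
    · rw [Submodule.span_le]
      rintro _ ⟨i, j, rfl⟩
      exact Submodule.le_topologicalClosure _ (hmem (i+j) i j rfl)
end
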